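/- Let g : I → J be a C³ diffeomorphism between open real intervals with nonnegative Schwarzian derivative S(g) = g'''/g' - (3/2)(g''/g')². Then for every x in I, the nonlinearity |g''(x)/g'(x)| is bounded above by 2/d_I(x), where d_I(x) is the distance from x to the boundary of I. -/

import Mathlib

/-- Schwarzian derivative `S g = g'''/g' - (3/2)(g''/g')²`. -/
noncomputable def schwarzian (g : ℝ → ℝ) (x : ℝ) : ℝ :=
  deriv (deriv (deriv g)) x / deriv g x - 3 / 2 * (deriv (deriv g) x / deriv g x) ^ 2

/-- The C³ Koebe distortion lemma: a C³ diffeomorphism between open intervals with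
nonnegative Schwarzian derivative has nonlinearity bounded by `2 / d_I(x)`. -/
theorem stmt_0 (a b c d : ℝ) (hab : a < b) (hcd : c < d) (g : ℝ → ℝ)
    (hg : ContDiffOn ℝ 3 g (Set.Ioo a b))
    (hginj : Set.InjOn g (Set.Ioo a b))
    (hgsurj : g '' Set.Ioo a b = Set.Ioo c d)
    (hg' : ∀ x ∈ Set.Ioo a b, deriv g x ≠ 0)
    (hS : ∀ x ∈ Set.Ioo a b, 0 ≤ schwarzian g x) :
    ∀ x ∈ Set.Ioo a b,
      |deriv (deriv g) x / deriv g x| ≤ 2 / min (x - a) (b - x) := by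
  intro x hx
  obtain ⟨hax, hxb⟩ := hx
  have hx : x ∈ Set.Ioo a b := ⟨hax, hxb⟩
  have hs : IsOpen (Set.Ioo a b) := isOpen_Ioo
  set N : ℝ → ℝ := fun y => deriv (deriv g) y / deriv g y with hN
  -- regularity of derivatives
  have hg1 : ContDiffOn ℝ 2 (deriv g) (Set.Ioo a b) :=
    hg.deriv_of_isOpen hs (by norm_num)
  have hg2 : ContDiffOn ℝ 1 (deriv (deriv g)) (Set.Ioo a b) :=
    hg1.deriv_of_isOpen hs (by norm_num)
  have hNc : ContinuousOn N (Set.Ioo a b) :=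
    (hg2.continuousOn).div (hg1.continuousOn) hg'
  have hd1 : ∀ y ∈ Set.Ioo a b, HasDerivAt (deriv g) (deriv (deriv g) y) y := by
    intro y hy
    exact ((hg1.differentiableOn (by norm_num)).differentiableAt (hs.mem_nhds hy)).hasDerivAt
  have hd2 : ∀ y ∈ Set.Ioo a b, HasDerivAt (deriv (deriv g)) (deriv (deriv (deriv g)) y) y := by
    intro y hy
    exact ((hg2.differentiableOn (by norm_num)).differentiableAt (hs.mem_nhds hy)).hasDerivAt
  have hNd : ∀ y ∈ Set.Ioo a b, HasDerivAt N (schwarzian g y + (N y) ^ 2 / 2) y := by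
    intro y hy
    have h2 := (hd2 y hy).div (hd1 y hy) (hg' y hy)
    refine h2.congr_deriv ?_
    have hgy := hg' y hy
    simp only [schwarzian, hN]
    field_simp
    ring
  set F : ℝ → ℝ := fun y => ∫ t in x..y, N t with hF
  have hFd : ∀ y ∈ Set.Ioo a b, HasDerivAt F (N y) y := by
    intro y hy
    have hsub : Set.uIcc x y ⊆ Set.Ioo a b :=
      Set.OrdConnected.uIcc_subset Set.ordConnected_Ioo hx hy
    have hint : IntervalIntegrable N MeasureTheory.volume x y :=
      (hNc.mono hsub).intervalIntegrable
    have hmeas : StronglyMeasurableAtFilter N (nhds y) :=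
      ContinuousOn.stronglyMeasurableAtFilter hs hNc y hy
    exact intervalIntegral.integral_hasDerivAt_right hint hmeas
      (hNc.continuousAt (hs.mem_nhds hy))
  set h : ℝ → ℝ := fun y => Real.exp (-F y / 2) with hh
  have hpos : ∀ y, 0 < h y := fun y => Real.exp_pos _
  set h1 : ℝ → ℝ := fun y => h y * (-(N y) / 2) with hh1
  have hhd : ∀ y ∈ Set.Ioo a b, HasDerivAt h (h1 y) y := by
    intro y hy
    have H := ((hFd y hy).neg.div_const 2).exp
    refine H.congr_deriv ?_
    all_goals simp only [hh1, hh, Pi.neg_apply]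
  have hh1d : ∀ y ∈ Set.Ioo a b, HasDerivAt h1 (h y * (-(schwarzian g y) / 2)) y := by
    intro y hy
    have H := (hhd y hy).mul ((hNd y hy).neg.div_const 2)
    refine H.congr_deriv ?_
    all_goals simp only [hh1, Pi.neg_apply]; ring
  have hanti : AntitoneOn h1 (Set.Ioo a b) := by
    apply antitoneOn_of_deriv_nonpos (convex_Ioo a b)
    · exact fun y hy => (hh1d y hy).continuousAt.continuousWithinAt
    · rw [interior_Ioo]
      exact fun y hy => (hh1d y hy).differentiableAt.differentiableWithinAt
    · intro y hy
      rw [interior_Ioo] at hy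
      rw [(hh1d y hy).deriv]
      have h1' := hS y hy
      have h2' := (hpos y).le
      nlinarith
  have hhx : h x = 1 := by
    simp [hh, hF, intervalIntegral.integral_same]
  have key : ∀ y ∈ Set.Ioo a b, h y ≤ 1 + h1 x * (y - x) := by
    intro y hy
    rcases lt_trichotomy y x with hyx | rfl | hxy
    · have hsub : Set.Icc y x ⊆ Set.Ioo a b :=
        Set.OrdConnected.out Set.ordConnected_Ioo hy hx
      obtain ⟨cc, hcc, hceq⟩ := exists_hasDerivAt_eq_slope h h1 hyx
        (fun z hz => (hhd z (hsub hz)).continuousAt.continuousWithinAt)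
        (fun z hz => hhd z (hsub (Set.mem_Icc_of_Ioo hz)))
      have hcmem : cc ∈ Set.Ioo a b := hsub (Set.mem_Icc_of_Ioo hcc)
      have hmono : h1 x ≤ h1 cc := hanti hcmem hx hcc.2.le
      have hxy' : 0 < x - y := sub_pos.mpr hyx
      rw [hceq, le_div_iff₀ hxy', hhx] at hmono
      have heq : h1 x * (y - x) = -(h1 x * (x - y)) := by ring
      linarith
    · simp [hhx]
    · have hsub : Set.Icc x y ⊆ Set.Ioo a b :=
        Set.OrdConnected.out Set.ordConnected_Ioo hx hy
      obtain ⟨cc, hcc, hceq⟩ := exists_hasDerivAt_eq_slope h h1 hxy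
        (fun z hz => (hhd z (hsub hz)).continuousAt.continuousWithinAt)
        (fun z hz => hhd z (hsub (Set.mem_Icc_of_Ioo hz)))
      have hcmem : cc ∈ Set.Ioo a b := hsub (Set.mem_Icc_of_Ioo hcc)
      have hmono : h1 cc ≤ h1 x := hanti hx hcmem hcc.1.le
      have hxy' : 0 < y - x := sub_pos.mpr hxy
      rw [hceq, div_le_iff₀ hxy', hhx] at hmono
      linarith
  have hh1x : h1 x = -(N x) / 2 := by
    simp only [hh1]; rw [hhx]; ring
  have hxa : 0 < x - a := sub_pos.mpr hax
  have hbx : 0 < b - x := sub_pos.mpr hxb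
  -- upper bound on h1 x
  have hub : h1 x ≤ 1 / (x - a) := by
    by_contra hcon
    push_neg at hcon
    have hpos1 : 0 < h1 x := lt_trans (by positivity) hcon
    have hmul : 1 < h1 x * (x - a) := by
      rw [div_lt_iff₀ hxa] at hcon
      nlinarith
    have hinv : 1 / h1 x < x - a := by
      rw [div_lt_iff₀ hpos1]
      nlinarith
    have hinvpos : 0 < 1 / h1 x := by positivity
    set y := (a + (x - 1 / h1 x)) / 2 with hy
    have hy1 : a < y := by rw [hy]; linarith
    have hy2 : y < x := by rw [hy]; linarith
    have hymem : y ∈ Set.Ioo a b := ⟨hy1, lt_trans hy2 hxb⟩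
    have hk := key y hymem
    have hp := hpos y
    have hcancel : h1 x * (1 / h1 x) = 1 := mul_one_div_cancel (ne_of_gt hpos1)
    have hprod : h1 x * (y - x) ≤ -1 := by
      have heq : h1 x * (y - x) = (-(h1 x * (x - a)) - h1 x * (1 / h1 x)) / 2 := by
        rw [hy]; ring
      rw [heq, hcancel]
      linarith
    linarith
  -- lower bound on h1 x
  have hlb : -(1 / (b - x)) ≤ h1 x := by
    by_contra hcon
    push_neg at hcon
    have hneg1 : h1 x < 0 := by
      have : 0 < 1 / (b - x) := by positivity
      linarith
    have hposneg : 0 < -h1 x := by linarith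
    have hmul : 1 < -h1 x * (b - x) := by
      have h3 : 1 / (b - x) < -h1 x := by linarith
      rw [div_lt_iff₀ hbx] at h3
      nlinarith
    have hinv : 1 / (-h1 x) < b - x := by
      rw [div_lt_iff₀ hposneg]
      nlinarith
    have hinvpos : 0 < 1 / (-h1 x) := by positivity
    set y := (b + (x + 1 / (-h1 x))) / 2 with hy
    have hy1 : x < y := by rw [hy]; linarith
    have hy2 : y < b := by rw [hy]; linarith
    have hymem : y ∈ Set.Ioo a b := ⟨lt_trans hax hy1, hy2⟩
    have hk := key y hymem
    have hp := hpos y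
    have hcancel : -h1 x * (1 / (-h1 x)) = 1 := mul_one_div_cancel (ne_of_gt hposneg)
    have hprod : h1 x * (y - x) ≤ -1 := by
      have heq : h1 x * (y - x) = (-(-h1 x * (b - x)) - -h1 x * (1 / (-h1 x))) / 2 := by
        rw [hy]; ring
      rw [heq, hcancel]
      linarith
    linarith
  -- conclude
  have hmin : 0 < min (x - a) (b - x) := lt_min hxa hbx
  have hNle : N x ≤ 2 / (b - x) := by
    rw [hh1x] at hlb
    have h2 : 2 / (b - x) = 2 * (1 / (b - x)) := by ring
    linarith
  have hNge : -(2 / (x - a)) ≤ N x := by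
    rw [hh1x] at hub
    have h2 : 2 / (x - a) = 2 * (1 / (x - a)) := by ring
    linarith
  show |N x| ≤ 2 / min (x - a) (b - x)
  rw [abs_le]
  constructor
  · have h2 : 2 / (x - a) ≤ 2 / min (x - a) (b - x) := by
      gcongr
      exact min_le_left _ _
    linarith
  · have h2 : 2 / (b - x) ≤ 2 / min (x - a) (b - x) := by
      gcongr
      exact min_le_right _ _
    linarith
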